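/- For all nonnegative integers n, m, ℓ, h, the number of F-paths Q in F_n with height(Q) = m, north(Q) = ℓ and aone(Q) = h equals the number of F-paths Q in F_n with height(Q) = m, north(Q) = ℓ and bone(Q) − north(Q) = h. -/

import Mathlib

/-- An `F`-step: `(0,1)` or `(a,b)` with `a ≥ 1` and `b ≤ 1`. -/
def IsFStep (s : ℤ × ℤ) : Prop := s = (0, 1) ∨ (1 ≤ s.1 ∧ s.2 ≤ 1)

/-- An `F`-path: a sequence of `F`-steps whose prefix sums satisfy
`a_1 + ⋯ + a_i ≤ b_1 + ⋯ + b_i`. -/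
def IsFPath (Q : List (ℤ × ℤ)) : Prop :=
  (∀ s ∈ Q, IsFStep s) ∧
  ∀ i : ℕ, ((Q.take i).map Prod.fst).sum ≤ ((Q.take i).map Prod.snd).sum

/-- The set of `F`-paths of length `n`. -/
def FPaths (n : ℕ) : Set (List (ℤ × ℤ)) := {Q | Q.length = n ∧ IsFPath Q}

def fheight (Q : List (ℤ × ℤ)) : ℤ := (Q.map Prod.snd).sum - (Q.map Prod.fst).sum

def fnorth (Q : List (ℤ × ℤ)) : ℕ := Q.countP (fun s => decide (s = ((0 : ℤ), (1 : ℤ))))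

def faone (Q : List (ℤ × ℤ)) : ℕ := Q.countP (fun s => decide (s.1 = 1))

def fbone (Q : List (ℤ × ℤ)) : ℕ := Q.countP (fun s => decide (s.2 = 1))

/-- Steps of a Schröder path. -/
inductive SStep : Type
  | u | d | h
deriving DecidableEq

/-- The width of a Schröder step. -/
def swidth : SStep → ℕ
  | .u => 1
  | .d => 1
  | .h => 2

/-- The height-change of a Schröder step. -/
def shc : SStep → ℤ
  | .u => 1
  | .d => -1
  | .h => 0

/-- A Schröder path of semilength `n`. -/
def IsSchroder (n : ℕ) (P : List SStep) : Prop :=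
  (P.map swidth).sum = 2 * n ∧ (P.map shc).sum = 0 ∧
  ∀ i : ℕ, 0 ≤ ((P.take i).map shc).sum

/-- Schröder paths of semilength `n` without triple descents. -/
def SchP (n : ℕ) : Set (List SStep) :=
  {P | IsSchroder n P ∧ ¬ [SStep.d, SStep.d, SStep.d] <:+: P}

/-- Number of `h` letters preceded by a prefix of total height-change `0`. -/
noncomputable def scomp (P : List SStep) : ℕ :=
  Set.ncard {i : ℕ | P[i]? = some SStep.h ∧ ((P.take i).map shc).sum = 0}

/-- Number of `h` letters plus number of double descents. -/
noncomputable def shdd (P : List SStep) : ℕ :=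
  P.countP (fun s => decide (s = SStep.h)) +
    Set.ncard {i : ℕ | P[i]? = some SStep.d ∧ P[i + 1]? = some SStep.d}

/-- Number of peaks `ud`. -/
noncomputable def speak (P : List SStep) : ℕ :=
  Set.ncard {i : ℕ | P[i]? = some SStep.u ∧ P[i + 1]? = some SStep.d}

/-- Steps of a bicolored Dyck path: up, red down, black down. -/
inductive BStep : Type
  | u | dR | dB
deriving DecidableEq

/-- A restricted bicolored Dyck path of semilength `n`:
`u^{i_1} dR^{j_1} dB^{k_1} ⋯ u^{i_{ℓ-1}} dR^{j_{ℓ-1}} dB^{k_{ℓ-1}} u^{i_ℓ} dR^{j_ℓ}`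
with positive `i`'s and `k`'s, `∑ i = n`, `∑ j + ∑ k = n`, and every prefix having
at least as many `u`'s as down steps. -/
def IsRBD (n : ℕ) (B : List BStep) : Prop :=
  (∃ (blocks : List (ℕ × ℕ × ℕ)) (iL jL : ℕ),
    (∀ t ∈ blocks, 1 ≤ t.1 ∧ 1 ≤ t.2.2) ∧ 1 ≤ iL ∧
    B = (blocks.map (fun t =>
        List.replicate t.1 BStep.u ++ List.replicate t.2.1 BStep.dR ++
          List.replicate t.2.2 BStep.dB)).flatten ++
        (List.replicate iL BStep.u ++ List.replicate jL BStep.dR) ∧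
    (blocks.map (fun t => t.1)).sum + iL = n ∧
    (blocks.map (fun t => t.2.1)).sum + jL + (blocks.map (fun t => t.2.2)).sum = n) ∧
  ∀ i : ℕ, (B.take i).countP (fun s => decide (s ≠ BStep.u)) ≤
    (B.take i).countP (fun s => decide (s = BStep.u))

/-- The length of the final run of red down steps. -/
def blast (B : List BStep) : ℕ := (B.reverse.takeWhile (fun s => decide (s = BStep.dR))).length

/-- The number of double ascents `uu`. -/
noncomputable def bdasc (B : List BStep) : ℕ :=
  Set.ncard {i : ℕ | B[i]? = some BStep.u ∧ B[i + 1]? = some BStep.u}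

/-- The number of occurrences of `u dB u` or `dR dB u`. -/
noncomputable def bbval (B : List BStep) : ℕ :=
  Set.ncard {i : ℕ | (B[i]? = some BStep.u ∨ B[i]? = some BStep.dR) ∧
    B[i + 1]? = some BStep.dB ∧ B[i + 2]? = some BStep.u}

/-- `π : ℕ → ℕ` encodes a permutation of `{1,…,N}`, with value `0` outside
(in particular `π 0 = 0`). -/
def IsPermOn (N : ℕ) (π : ℕ → ℕ) : Prop :=
  Set.BijOn π (Set.Icc 1 N) (Set.Icc 1 N) ∧ ∀ i, i ∉ Set.Icc 1 N → π i = 0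

/-- `π` contains the pattern given by the word `σ`. -/
def ContainsPat (N : ℕ) (π : ℕ → ℕ) (σ : List ℕ) : Prop :=
  ∃ f : Fin σ.length → ℕ, StrictMono f ∧ (∀ t, f t ∈ Set.Icc 1 N) ∧
    ∀ s t : Fin σ.length, π (f s) < π (f t) ↔ σ.get s < σ.get t

/-- Permutations of `{1,…,N}` avoiding the patterns `2341`, `2431` and `3241`. -/
def PermSet (N : ℕ) : Set (ℕ → ℕ) :=
  {π | IsPermOn N π ∧ ¬ContainsPat N π [2, 3, 4, 1] ∧ ¬ContainsPat N π [2, 4, 3, 1] ∧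
    ¬ContainsPat N π [3, 2, 4, 1]}

/-- `block(π)`: the number of `j ∈ {1,…,N}` with `{π(1),…,π(j)} = {1,…,j}`. -/
noncomputable def blockStat (N : ℕ) (π : ℕ → ℕ) : ℕ :=
  Set.ncard {j : ℕ | 1 ≤ j ∧ j ≤ N ∧ π '' Set.Icc 1 j = Set.Icc 1 j}

/-- `asc(π)`: the number of ascents of `π`. -/
noncomputable def ascStat (N : ℕ) (π : ℕ → ℕ) : ℕ :=
  Set.ncard {i : ℕ | 1 ≤ i ∧ i + 1 ≤ N ∧ π i < π (i + 1)}

/-- `crit(π)`: the number of critical entries of `π`. -/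
noncomputable def critStat (N : ℕ) (π : ℕ → ℕ) : ℕ :=
  Set.ncard {i : ℕ | 1 ≤ i ∧ i ≤ N ∧ ∀ j k : ℕ, 1 ≤ j → j < i → i < k → k ≤ N →
    π j < π i → π k < π i → π j < π k}

/-- An inversion sequence: `0 ≤ e_i < i` (1-indexed). -/
def IsInvSeq (e : List ℕ) : Prop := ∀ i : Fin e.length, e.get i < i.val + 1

/-- `e` contains the pattern `101`. -/
def Contains101 (e : List ℕ) : Prop :=
  ∃ i j k : Fin e.length, i < j ∧ j < k ∧ e.get j < e.get i ∧ e.get i = e.get k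

/-- `e` contains the pattern `102`. -/
def Contains102 (e : List ℕ) : Prop :=
  ∃ i j k : Fin e.length, i < j ∧ j < k ∧ e.get j < e.get i ∧ e.get i < e.get k

/-- `e` contains the pattern `021`. -/
def Contains021 (e : List ℕ) : Prop :=
  ∃ i j k : Fin e.length, i < j ∧ j < k ∧ e.get i < e.get k ∧ e.get k < e.get j

/-- Inversion sequences of length `n` avoiding `101` and `102`. -/
def ISet (n : ℕ) : Set (List ℕ) :=
  {e | e.length = n ∧ IsInvSeq e ∧ ¬Contains101 e ∧ ¬Contains102 e}

/-- Inversion sequences of length `n` avoiding `101` and `021`. -/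
def JSet (n : ℕ) : Set (List ℕ) :=
  {e | e.length = n ∧ IsInvSeq e ∧ ¬Contains101 e ∧ ¬Contains021 e}

/-- The largest entry of `e` (`0` for the empty sequence). -/
def maxVal (e : List ℕ) : ℕ := e.foldr max 0

/-- The largest (1-indexed) position of the maximal entry of `e`. -/
def maxid (e : List ℕ) : ℕ := e.length - e.reverse.idxOf (maxVal e)

/-- `e` with the entry at position `maxid e` removed. -/
def ehat (e : List ℕ) : List ℕ := e.eraseIdx (maxid e - 1)

/-- `omi(e)`: the number of `i ∈ {1,…,n}` not occurring as an entry of `e`. -/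
noncomputable def omi (e : List ℕ) : ℕ := Set.ncard {i : ℕ | 1 ≤ i ∧ i ≤ e.length ∧ i ∉ e}

/-- `cons(e)`: the number of `i ∈ {1,…,n-1}` such that both `i-1` and `i` occur in `e`. -/
noncomputable def consStat (e : List ℕ) : ℕ :=
  Set.ncard {i : ℕ | 1 ≤ i ∧ i + 1 ≤ e.length ∧ (i - 1) ∈ e ∧ i ∈ e}

/-- `first(e)`: the length of the initial run of zeros of `e`. -/
def firstStat (e : List ℕ) : ℕ := (e.takeWhile (fun v => decide (v = 0))).length

/-- `single(e)`: the number of positive integers occurring exactly once in `e`. -/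
noncomputable def singleStat (e : List ℕ) : ℕ := Set.ncard {v : ℕ | 1 ≤ v ∧ e.count v = 1}

/-- The binomial coefficient `C(p,q)`, interpreted as `0` unless `0 ≤ q ≤ p`. -/
def C (p q : ℤ) : ℤ := if 0 ≤ q ∧ q ≤ p then (p.toNat.choose q.toNat : ℤ) else 0


def ffF (s : ℤ × ℤ) : ℤ × ℤ := if s = (0, 1) then s else (2 - s.2, 2 - s.1)

lemma ffF_spec {s : ℤ × ℤ} (hs : IsFStep s) :
    IsFStep (ffF s) ∧ ffF (ffF s) = s ∧ (ffF s).2 - (ffF s).1 = s.2 - s.1 ∧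
    ((ffF s = (0,1)) ↔ (s = (0,1))) ∧
    (((ffF s).1 = 1) ↔ (s.2 = 1 ∧ s ≠ (0,1))) ∧
    (((ffF s).2 = 1 ∧ ffF s ≠ (0,1)) ↔ s.1 = 1) := by
  rcases hs with h | ⟨h1, h2⟩
  · subst h
    simp [ffF, IsFStep]
  · have hne : s ≠ (0,1) := by
      rintro rfl; norm_num at h1
    have hf : ffF s = (2 - s.2, 2 - s.1) := by simp [ffF, hne]
    have hc : ((2 - s.2, 2 - s.1) : ℤ × ℤ) ≠ (0,1) := by
      intro hcc
      rw [Prod.ext_iff] at hcc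
      simp at hcc; omega
    have hfne : ffF s ≠ (0,1) := by rw [hf]; exact hc
    have hff : ffF (ffF s) = s := by
      rw [hf, ffF, if_neg hc, Prod.ext_iff]
      constructor <;> simp
    refine ⟨?_, hff, ?_, ?_, ?_, ?_⟩
    · rw [hf]; right; dsimp; omega
    · rw [hf]; dsimp; ring
    · simp [hfne, hne]
    · rw [hf]; simp [hne]; omega
    · rw [hf]; simp [hc]; omega

lemma ffF_map_map {Q : List (ℤ × ℤ)} (h : ∀ s ∈ Q, IsFStep s) :
    (Q.map ffF).map ffF = Q := by
  induction Q with
  | nil => rfl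
  | cons s Q ih =>
    have hs := ffF_spec (h s (by simp))
    simp only [List.map_cons, hs.2.1, List.cons.injEq, true_and]
    exact ih (fun t ht => h t (by simp [ht]))

lemma ffF_diff {Q : List (ℤ × ℤ)} (h : ∀ s ∈ Q, IsFStep s) :
    ((Q.map ffF).map Prod.snd).sum - ((Q.map ffF).map Prod.fst).sum
      = (Q.map Prod.snd).sum - (Q.map Prod.fst).sum := by
  induction Q with
  | nil => simp
  | cons s Q ih =>
    have hs := ffF_spec (h s (by simp))
    have ih' := ih (fun t ht => h t (by simp [ht]))
    simp only [List.map_cons, List.sum_cons]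
    linarith [hs.2.2.1]

lemma ffF_path {n : ℕ} {Q : List (ℤ × ℤ)} (hQ : Q ∈ FPaths n) : Q.map ffF ∈ FPaths n := by
  obtain ⟨hlen, hstep, hpre⟩ := hQ
  refine ⟨by simpa using hlen, fun t ht => ?_, fun i => ?_⟩
  · obtain ⟨s, hs, rfl⟩ := List.mem_map.mp ht
    exact (ffF_spec (hstep s hs)).1
  · have htk : (Q.map ffF).take i = (Q.take i).map ffF := by
      rw [List.map_take]
    rw [htk]
    have := ffF_diff (Q := Q.take i) (fun t ht => hstep t (List.take_subset i Q ht))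
    have h2 := hpre i
    linarith

lemma ffF_fnorth {Q : List (ℤ × ℤ)} (h : ∀ s ∈ Q, IsFStep s) :
    fnorth (Q.map ffF) = fnorth Q := by
  unfold fnorth
  rw [List.countP_map]
  exact List.countP_congr (fun a ha => by simpa using (ffF_spec (h a ha)).2.2.2.1)

lemma ffF_fheight {Q : List (ℤ × ℤ)} (h : ∀ s ∈ Q, IsFStep s) :
    fheight (Q.map ffF) = fheight Q := ffF_diff h

lemma ffF_fbone {Q : List (ℤ × ℤ)} (h : ∀ s ∈ Q, IsFStep s) :
    fbone (Q.map ffF) = fnorth Q + faone Q := by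
  induction Q with
  | nil => rfl
  | cons s Q ih =>
    have hs := ffF_spec (h s (by simp))
    have ih' := ih (fun t ht => h t (by simp [ht]))
    simp only [fbone, fnorth, faone, List.map_cons, List.countP_cons,
      decide_eq_true_eq] at ih' ⊢
    rw [ih']
    by_cases hn : s = ((0 : ℤ), (1 : ℤ))
    · have e1 : (ffF s).2 = 1 := by rw [hs.2.2.2.1.mpr hn]
      have e2 : ¬ s.1 = 1 := by simp [hn]
      rw [if_pos e1, if_pos hn, if_neg e2]
      ring
    · have hfne : ffF s ≠ ((0 : ℤ), (1 : ℤ)) := fun hc => hn (hs.2.2.2.1.mp hc)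
      have h2 : ((ffF s).2 = 1) ↔ (s.1 = 1) :=
        ⟨fun hb => hs.2.2.2.2.2.mp ⟨hb, hfne⟩, fun ha => (hs.2.2.2.2.2.mpr ha).1⟩
      by_cases ha : s.1 = 1
      · rw [if_pos (h2.mpr ha), if_neg hn, if_pos ha]; ring
      · rw [if_neg (fun hc => ha (h2.mp hc)), if_neg hn, if_neg ha]; omega

lemma ffF_faone {Q : List (ℤ × ℤ)} (h : ∀ s ∈ Q, IsFStep s) :
    faone (Q.map ffF) + fnorth Q = fbone Q := by
  induction Q with
  | nil => rfl
  | cons s Q ih =>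
    have hs := ffF_spec (h s (by simp))
    have ih' := ih (fun t ht => h t (by simp [ht]))
    simp only [fbone, fnorth, faone, List.map_cons, List.countP_cons,
      decide_eq_true_eq] at ih' ⊢
    by_cases hn : s = ((0 : ℤ), (1 : ℤ))
    · have e0 : ffF s = ((0 : ℤ), (1 : ℤ)) := hs.2.2.2.1.mpr hn
      have e1 : ¬ (ffF s).1 = 1 := by rw [e0]; norm_num
      have e2 : s.2 = 1 := by rw [hn]
      rw [if_neg e1, if_pos hn, if_pos e2]
      omega
    · have h2 : ((ffF s).1 = 1) ↔ (s.2 = 1) := by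
        rw [hs.2.2.2.2.1]
        exact ⟨fun hh => hh.1, fun hh => ⟨hh, hn⟩⟩
      by_cases hb : s.2 = 1
      · rw [if_pos (h2.mpr hb), if_neg hn, if_pos hb]; omega
      · rw [if_neg (fun hc => hb (h2.mp hc)), if_neg hn, if_neg hb]; omega


/-- The involution `φ_F` shows that `(height, north, aone)` and
`(height, north, bone - north)` are equidistributed on `F_n`. -/
theorem aone_bone_equidistributed (n m ℓ h : ℕ) :
    ({Q ∈ FPaths n | fheight Q = (m : ℤ) ∧ fnorth Q = ℓ ∧ faone Q = h}).ncard =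
    ({Q ∈ FPaths n | fheight Q = (m : ℤ) ∧ fnorth Q = ℓ ∧
        (fbone Q : ℤ) - (fnorth Q : ℤ) = (h : ℤ)}).ncard := by
  set A := {Q ∈ FPaths n | fheight Q = (m : ℤ) ∧ fnorth Q = ℓ ∧ faone Q = h} with hA
  set B := {Q ∈ FPaths n | fheight Q = (m : ℤ) ∧ fnorth Q = ℓ ∧
      (fbone Q : ℤ) - (fnorth Q : ℤ) = (h : ℤ)} with hB
  have himg : (fun Q => Q.map ffF) '' A = B := by
    apply Set.Subset.antisymm
    · rintro _ ⟨Q, ⟨hQF, hh, hn, ha⟩, rfl⟩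
      have hst : ∀ s ∈ Q, IsFStep s := hQF.2.1
      refine ⟨ffF_path hQF, ?_, ?_, ?_⟩
      · rw [ffF_fheight hst]; exact hh
      · rw [ffF_fnorth hst]; exact hn
      · rw [ffF_fbone hst, ffF_fnorth hst]
        push_cast
        omega
    · rintro Q ⟨hQF, hh, hn, hb⟩
      have hst : ∀ s ∈ Q, IsFStep s := hQF.2.1
      refine ⟨Q.map ffF, ⟨ffF_path hQF, ?_, ?_, ?_⟩, ffF_map_map hst⟩
      · rw [ffF_fheight hst]; exact hh
      · rw [ffF_fnorth hst]; exact hn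
      · have := ffF_faone hst
        omega
  have hinj : Set.InjOn (fun Q => Q.map ffF) A := by
    intro Q1 h1 Q2 h2 he
    have e2 := congrArg (List.map ffF) he
    simp only at e2
    rwa [ffF_map_map h1.1.2.1, ffF_map_map h2.1.2.1] at e2
  calc A.ncard = ((fun Q => Q.map ffF) '' A).ncard := (Set.ncard_image_of_injOn hinj).symm
    _ = B.ncard := by rw [himg]
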